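/- Let (K, K^∨) be a pair of dual reflexive Gorenstein cones of index k with deg^∨ = (1/2)(s_1 + ⋯ + s_{2r}) + t_1 + ⋯ + t_{k−r}, where the s_i, t_j ∈ K^∨_(1) are linearly independent. Then for every nonzero vector v ∈ ℝ^d with ⟨v, s_i⟩ = 0 for all i and ⟨v, t_j⟩ = 0 for all j, there exist n_+, n_− ∈ K^∨_(1) with ⟨v, n_+⟩ > 0 and ⟨v, n_−⟩ < 0. (Equivalently, the origin lies in the interior of the image Θ of the convex hull of K^∨_(1) in the quotient of ℝ^d by the span of the s_i and t_j.) -/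

import Mathlib

open scoped BigOperators Pointwise

noncomputable section

/-- The standard pairing `⟨x, y⟩ = ∑ i, x i * y i` on `ℝ^d`. -/
def pairR {d : ℕ} (x y : Fin d → ℝ) : ℝ := ∑ i, x i * y i

/-- A point of `ℝ^d` is a lattice point if all of its coordinates are integers. -/
def IsLatticePoint {d : ℕ} (x : Fin d → ℝ) : Prop := ∀ i, ∃ z : ℤ, x i = (z : ℝ)

/-- The dual cone `K^∨ = {y : ⟨x, y⟩ ≥ 0 for all x ∈ K}`. -/
def dualCone {d : ℕ} (K : Set (Fin d → ℝ)) : Set (Fin d → ℝ) :=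
  { y | ∀ x ∈ K, 0 ≤ pairR x y }

/-- A Gorenstein cone with degree element `n` (a lattice point): the set of all
nonnegative real linear combinations of a finite set of lattice points, each pairing
to `1` with `n`, such that `K ∩ (−K) = {0}` and `span K = ℝ^d`. -/
def IsGorensteinCone {d : ℕ} (K : Set (Fin d → ℝ)) (n : Fin d → ℝ) : Prop :=
  IsLatticePoint n ∧
  (∃ S : Finset (Fin d → ℝ),
      (∀ v ∈ S, IsLatticePoint v ∧ pairR v n = 1) ∧
      K = { x | ∃ c : (Fin d → ℝ) → ℝ, (∀ v, 0 ≤ c v) ∧ x = ∑ v ∈ S, c v • v }) ∧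
  K ∩ (-K) = {0} ∧
  Submodule.span ℝ K = ⊤

/-- `K_(1)`: the lattice points `m ∈ K` with `⟨m, deg^∨⟩ = 1`. -/
def Kone {d : ℕ} (K : Set (Fin d → ℝ)) (degVee : Fin d → ℝ) : Set (Fin d → ℝ) :=
  { m | IsLatticePoint m ∧ m ∈ K ∧ pairR m degVee = 1 }

/-- `K^∨_(1)`: the lattice points `n ∈ K^∨` with `⟨deg, n⟩ = 1`. -/
def KvOne {d : ℕ} (K : Set (Fin d → ℝ)) (deg : Fin d → ℝ) : Set (Fin d → ℝ) :=
  { n | IsLatticePoint n ∧ n ∈ dualCone K ∧ pairR deg n = 1 }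


lemma pairR_comm {d : ℕ} (x y : Fin d → ℝ) : pairR x y = pairR y x := by
  simp [pairR, mul_comm]

lemma pairR_add_right {d : ℕ} (x y z : Fin d → ℝ) :
    pairR x (y + z) = pairR x y + pairR x z := by
  simp [pairR, Pi.add_apply, mul_add, Finset.sum_add_distrib]

lemma pairR_smul_right {d : ℕ} (c : ℝ) (x y : Fin d → ℝ) :
    pairR x (c • y) = c * pairR x y := by
  simp [pairR, Finset.mul_sum, mul_left_comm]

lemma pairR_sum_right {d : ℕ} {ι : Type*} (S : Finset ι) (f : ι → Fin d → ℝ)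
    (x : Fin d → ℝ) : pairR x (∑ i ∈ S, f i) = ∑ i ∈ S, pairR x (f i) := by
  simp only [pairR, Finset.sum_apply, Finset.mul_sum]
  exact Finset.sum_comm

lemma pairR_neg_left {d : ℕ} (x y : Fin d → ℝ) : pairR (-x) y = -pairR x y := by
  simp [pairR, Finset.sum_neg_distrib]

/-- Suppose `deg^∨ = (1/2)(s_1 + ⋯ + s_{2r}) + t_1 + ⋯ + t_{k−r}` with
the `s_i, t_j ∈ K^∨_(1)` linearly independent. Then for every nonzero `v ∈ ℝ^d` with
`⟨v, s_i⟩ = 0` and `⟨v, t_j⟩ = 0` for all `i, j`, there are `n₊, n₋ ∈ K^∨_(1)` with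
`⟨v, n₊⟩ > 0` and `⟨v, n₋⟩ < 0`. -/
theorem stmt13 {d k r : ℕ} (hrk : r ≤ k) (K : Set (Fin d → ℝ)) (deg degVee : Fin d → ℝ)
    (hK : IsGorensteinCone K degVee) (hKv : IsGorensteinCone (dualCone K) deg)
    (hk : pairR deg degVee = (k : ℝ))
    (s : Fin (2 * r) → (Fin d → ℝ)) (t : Fin (k - r) → (Fin d → ℝ))
    (hs : ∀ i, s i ∈ KvOne K deg) (ht : ∀ j, t j ∈ KvOne K deg)
    (hli : LinearIndependent ℝ (Sum.elim s t))
    (hdec : degVee = (2⁻¹ : ℝ) • (∑ i, s i) + ∑ j, t j)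
    (v : Fin d → ℝ) (hv : v ≠ 0)
    (hvs : ∀ i, pairR v (s i) = 0) (hvt : ∀ j, pairR v (t j) = 0) :
    (∃ n ∈ KvOne K deg, 0 < pairR v n) ∧ (∃ n ∈ KvOne K deg, pairR v n < 0) := by
  classical
  obtain ⟨hdegVlat, ⟨S, hS, hKeq⟩, hKpt, hKspan⟩ := hK
  obtain ⟨hdeglat, ⟨S', hS', hKveq⟩, _, _⟩ := hKv
  -- ⟨v, degVee⟩ = 0
  have hvdeg : pairR v degVee = 0 := by
    rw [hdec, pairR_add_right, pairR_smul_right, pairR_sum_right, pairR_sum_right]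
    simp [hvs, hvt]
  -- every element of S' is in KvOne K deg
  have hS'mem : ∀ n ∈ S', n ∈ KvOne K deg := by
    intro n hn
    refine ⟨(hS' n hn).1, ?_, by rw [pairR_comm]; exact (hS' n hn).2⟩
    rw [hKveq]
    refine ⟨fun w => if w = n then 1 else 0, fun w => by positivity, ?_⟩
    rw [Finset.sum_eq_single n (fun b _ hb => by simp [hb]) (fun h => absurd hn h)]
    simp
  -- key lemma
  have key : ∀ u : Fin d → ℝ, (∀ n ∈ S', 0 ≤ pairR u n) → pairR u degVee = 0 → u = 0 := by
    intro u hpos huz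
    have hdual : ∀ y ∈ dualCone K, 0 ≤ pairR u y := by
      intro y hy
      rw [hKveq] at hy
      obtain ⟨c, hc, rfl⟩ := hy
      rw [pairR_sum_right]
      refine Finset.sum_nonneg fun n hn => ?_
      rw [pairR_smul_right]
      exact mul_nonneg (hc n) (hpos n hn)
    have hall : ∀ w : Fin d → ℝ, 0 ≤ pairR u w := by
      intro w
      set M : ℝ := ∑ m ∈ S, |pairR m w| with hM
      have hMnn : 0 ≤ M := Finset.sum_nonneg fun m _ => abs_nonneg _
      set ε : ℝ := (1 + M)⁻¹ with hε
      have hεpos : 0 < ε := by positivity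
      have hmem : degVee + ε • w ∈ dualCone K := by
        intro x hx
        rw [hKeq] at hx
        obtain ⟨c, hc, rfl⟩ := hx
        rw [pairR_comm, pairR_sum_right]
        refine Finset.sum_nonneg fun m hm => ?_
        rw [pairR_smul_right]
        refine mul_nonneg (hc m) ?_
        rw [pairR_comm, pairR_add_right, pairR_smul_right, (hS m hm).2]
        have h1 : |pairR m w| ≤ M := by
          rw [hM]
          exact Finset.single_le_sum (f := fun m => |pairR m w|)
            (fun i _ => abs_nonneg _) hm
        have h2 : ε * |pairR m w| ≤ ε * M :=
          mul_le_mul_of_nonneg_left h1 hεpos.le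
        have h3 : ε * M < 1 := by
          rw [hε]
          rw [inv_mul_lt_iff₀ (by positivity)]
          linarith
        nlinarith [neg_abs_le (pairR m w), abs_nonneg (pairR m w)]
      have := hdual _ hmem
      rw [pairR_add_right, pairR_smul_right, huz, zero_add] at this
      exact nonneg_of_mul_nonneg_right this hεpos
    have huu : pairR u (-u) ≥ 0 := hall (-u)
    have huu' : pairR u u ≤ 0 := by
      have : pairR u (-u) = -pairR u u := by
        rw [pairR_comm, pairR_neg_left]
      linarith [this ▸ huu]
    funext i
    have hz : ∑ j, u j * u j = 0 := by
      have h0 : 0 ≤ pairR u u := Finset.sum_nonneg fun j _ => mul_self_nonneg (u j)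
      have : pairR u u = 0 := le_antisymm huu' h0
      simpa [pairR] using this
    have := (Finset.sum_eq_zero_iff_of_nonneg
      (fun j (_ : j ∈ Finset.univ) => mul_self_nonneg (u j))).mp hz i (Finset.mem_univ i)
    simpa [mul_self_eq_zero] using this
  constructor
  · by_contra h
    push_neg at h
    apply hv
    have : -v = 0 := by
      apply key (-v)
      · intro n hn
        rw [pairR_neg_left]
        have := h n (hS'mem n hn)
        linarith
      · rw [pairR_neg_left, hvdeg, neg_zero]
    have := congrArg Neg.neg this
    simpa using this
  · by_contra h
    push_neg at h
    apply hv
    apply key v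
    · intro n hn
      exact h n (hS'mem n hn)
    · exact hvdeg
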